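/- arXiv:2402.14329 — 2 statements merged into one kernel-verified Lean document; each statement's English description precedes it below -/
import Mathlib

section
/- Let m : ℝ → ℂ be purely imaginary, ω ∈ ℝ^ν, and k, γ, T > 0 with k − γT > 0. For a family W with ‖W‖_{k,γ,T} = ∑_n sup_{|t|≤T} |Ŵ(t,n)| e^{(k−γ|t|)|n|} < ∞, define (ΦW)(t,n) = i⟨ω,n⟩ ∫_0^t e^{-(t-τ) m(⟨ω,n⟩)} Ŵ(τ,n) dτ. Then ‖ΦW‖_{k,γ,T} ≤ (|ω|/γ) ‖W‖_{k,γ,T}. -/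
open intervalIntegral MeasureTheory

lemma aux_integral_exp_mul (c t : ℝ) (hc : c ≠ 0) :
    ∫ τ in (0:ℝ)..t, Real.exp (c * τ) = (Real.exp (c * t) - 1) / c := by
  have D : ∀ x : ℝ, HasDerivAt (fun y : ℝ => Real.exp (c * y) / c) (Real.exp (c * x)) x := by
    intro x
    have h := (((Real.hasDerivAt_exp (c * x)).comp x
      ((hasDerivAt_id x).const_mul c)).div_const c)
    refine h.congr_deriv ?_
    field_simp
  rw [integral_deriv_eq_sub' _ (funext fun x => (D x).deriv) fun x _ => (D x).differentiableAt]
  · field_simp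
    simp
  · fun_prop

lemma aux_abs_integral_mono {f g : ℝ → ℝ} {t : ℝ}
    (hf : IntervalIntegrable f volume 0 t) (hg : IntervalIntegrable g volume 0 t)
    (h0 : ∀ τ ∈ Set.uIcc (0:ℝ) t, 0 ≤ f τ) (h : ∀ τ ∈ Set.uIcc (0:ℝ) t, f τ ≤ g τ) :
    |∫ τ in (0:ℝ)..t, f τ| ≤ |∫ τ in (0:ℝ)..t, g τ| := by
  rcases le_total 0 t with ht | ht
  · rw [Set.uIcc_of_le ht] at h0 h
    rw [abs_of_nonneg (integral_nonneg ht fun τ hτ => h0 τ hτ),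
      abs_of_nonneg (integral_nonneg ht fun τ hτ => le_trans (h0 τ hτ) (h τ hτ))]
    exact integral_mono_on ht hf hg (fun τ hτ => h τ hτ)
  · rw [Set.uIcc_of_ge ht] at h0 h
    rw [integral_symm, abs_neg, integral_symm t 0, abs_neg,
      abs_of_nonneg (integral_nonneg ht fun τ hτ => h0 τ hτ),
      abs_of_nonneg (integral_nonneg ht fun τ hτ => le_trans (h0 τ hτ) (h τ hτ))]
    exact integral_mono_on ht hf.symm hg.symm (fun τ hτ => h τ hτ)

lemma aux_key_pos (γ N t : ℝ) (hγ : 0 < γ) (hN : 0 ≤ N) (ht : 0 ≤ t) :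
    N * (Real.exp (-(γ * t) * N) * |∫ τ in (0:ℝ)..t, Real.exp (γ * |τ| * N)|) ≤ 1 / γ := by
  rcases eq_or_lt_of_le hN with hN0 | hN0
  · rw [← hN0]; simp; positivity
  · have hc : γ * N ≠ 0 := by positivity
    have heq : (∫ τ in (0:ℝ)..t, Real.exp (γ * |τ| * N))
        = ∫ τ in (0:ℝ)..t, Real.exp ((γ * N) * τ) := by
      apply integral_congr
      intro τ hτ
      rw [Set.uIcc_of_le ht] at hτ
      simp only [abs_of_nonneg hτ.1]
      ring_nf
    rw [heq, aux_integral_exp_mul _ _ hc]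
    have h1 : Real.exp (γ * N * t) - 1 ≥ 0 := by
      simp [Real.one_le_exp_iff]; positivity
    rw [abs_of_nonneg (by positivity)]
    rw [le_div_iff₀ hγ, show -(γ * t) * N = -(γ * t * N) from by ring]
    have e : Real.exp (-(γ * t * N)) * Real.exp (γ * N * t) = 1 := by
      rw [← Real.exp_add, show -(γ * t * N) + γ * N * t = 0 by ring, Real.exp_zero]
    have expand : N * (Real.exp (-(γ * t * N)) * ((Real.exp (γ * N * t) - 1) / (γ * N))) * γ
        = 1 - Real.exp (-(γ * t * N)) := by
      rw [show N * (Real.exp (-(γ * t * N)) * ((Real.exp (γ * N * t) - 1) / (γ * N))) * γ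
          = (Real.exp (-(γ * t * N)) * Real.exp (γ * N * t) - Real.exp (-(γ * t * N))) *
            ((γ * N) / (γ * N)) by ring, div_self hc, mul_one, e]
    rw [expand]
    have := Real.exp_nonneg (-(γ * t * N))
    linarith

lemma aux_key (γ N t : ℝ) (hγ : 0 < γ) (hN : 0 ≤ N) :
    N * (Real.exp (-(γ * |t|) * N) * |∫ τ in (0:ℝ)..t, Real.exp (γ * |τ| * N)|) ≤ 1 / γ := by
  rcases le_total 0 t with ht | ht
  · rw [abs_of_nonneg ht]; exact aux_key_pos γ N t hγ hN ht
  · have hint : (∫ τ in (0:ℝ)..t, Real.exp (γ * |τ| * N))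
        = - ∫ τ in (0:ℝ)..(-t), Real.exp (γ * |τ| * N) := by
      have h2 := intervalIntegral.integral_comp_neg (a := (0:ℝ)) (b := -t)
        (fun τ => Real.exp (γ * |τ| * N))
      simp only [abs_neg, neg_zero, neg_neg] at h2
      rw [h2]
      exact integral_symm _ _
    rw [abs_of_nonpos ht, hint, abs_neg]
    exact aux_key_pos γ N (-t) hγ hN (by linarith)

lemma aux_key2 (γ k N t : ℝ) (hγ : 0 < γ) (hN : 0 ≤ N) :
    N * (Real.exp ((k - γ * |t|) * N) * |∫ τ in (0:ℝ)..t, Real.exp (-((k - γ * |τ|) * N))|)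
      ≤ 1 / γ := by
  have h1 : (∫ τ in (0:ℝ)..t, Real.exp (-((k - γ * |τ|) * N)))
      = Real.exp (-(k * N)) * ∫ τ in (0:ℝ)..t, Real.exp (γ * |τ| * N) := by
    rw [← intervalIntegral.integral_const_mul]
    apply integral_congr
    intro τ _
    dsimp only
    rw [← Real.exp_add]
    congr 1
    ring
  have h2 : Real.exp ((k - γ * |t|) * N) = Real.exp (k * N) * Real.exp (-(γ * |t|) * N) := by
    rw [← Real.exp_add]
    congr 1
    ring
  rw [h1, h2, abs_mul, abs_of_nonneg (Real.exp_nonneg _)]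
  have e : Real.exp (k * N) * Real.exp (-(k * N)) = 1 := by
    rw [← Real.exp_add, add_neg_cancel, Real.exp_zero]
  calc N * (Real.exp (k * N) * Real.exp (-(γ * |t|) * N) *
        (Real.exp (-(k * N)) * |∫ τ in (0:ℝ)..t, Real.exp (γ * |τ| * N)|))
      = (Real.exp (k * N) * Real.exp (-(k * N))) *
        (N * (Real.exp (-(γ * |t|) * N) * |∫ τ in (0:ℝ)..t, Real.exp (γ * |τ| * N)|)) := by ring
    _ = N * (Real.exp (-(γ * |t|) * N) * |∫ τ in (0:ℝ)..t, Real.exp (γ * |τ| * N)|) := by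
        rw [e, one_mul]
    _ ≤ 1 / γ := aux_key γ N t hγ hN

lemma aux_coord (ν : ℕ) (ω : EuclideanSpace ℝ (Fin ν)) (i : Fin ν) : |ω i| ≤ ‖ω‖ := by
  rw [← Real.sqrt_sq_eq_abs, EuclideanSpace.norm_eq]
  apply Real.sqrt_le_sqrt
  calc ω i ^ 2 = ‖ω i‖ ^ 2 := by rw [Real.norm_eq_abs, sq_abs]
    _ ≤ ∑ j, ‖ω j‖ ^ 2 := Finset.single_le_sum (f := fun j => ‖ω j‖ ^ 2)
        (fun j _ => sq_nonneg _) (Finset.mem_univ i)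

lemma aux_n (ν : ℕ) (k γ T : ℝ) (hγ : 0 < γ) (hT : 0 < T)
    (ω : EuclideanSpace ℝ (Fin ν)) (m : ℝ → ℂ) (him : ∀ ξ, (m ξ).re = 0)
    (W : ℝ → (Fin ν → ℤ) → ℂ) (hWc : ∀ n, Continuous fun t => W t n) (n : Fin ν → ℤ) :
    (⨆ t : Set.Icc (-T) T,
        ‖(Complex.I * ((∑ i, ω i * (n i : ℝ) : ℝ) : ℂ)) *
            ∫ τ in (0 : ℝ)..(t : ℝ),
              Complex.exp (-(((t : ℝ) - τ : ℝ) : ℂ) * m (∑ i, ω i * (n i : ℝ))) * W τ n‖ *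
          Real.exp ((k - γ * |(t : ℝ)|) * (∑ i, |(n i : ℝ)|)))
      ≤ (‖ω‖ / γ) * ⨆ t : Set.Icc (-T) T,
          ‖W (t : ℝ) n‖ * Real.exp ((k - γ * |(t : ℝ)|) * (∑ i, |(n i : ℝ)|)) := by
  haveI : Nonempty (Set.Icc (-T) T) := ⟨⟨0, by constructor <;> linarith⟩⟩
  set a : ℝ := ∑ i, ω i * (n i : ℝ) with hadef
  set N : ℝ := ∑ i, |(n i : ℝ)| with hNdef
  set S : ℝ := ⨆ t : Set.Icc (-T) T, ‖W (t : ℝ) n‖ * Real.exp ((k - γ * |(t : ℝ)|) * N)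
    with hSdef
  have hN : 0 ≤ N := Finset.sum_nonneg fun i _ => abs_nonneg _
  have hbdd : BddAbove (Set.range fun t : Set.Icc (-T) T =>
      ‖W (t : ℝ) n‖ * Real.exp ((k - γ * |(t : ℝ)|) * N)) := by
    have hcont : Continuous fun x : ℝ => ‖W x n‖ * Real.exp ((k - γ * |x|) * N) :=
      ((hWc n).norm).mul (by fun_prop)
    have h := ((isCompact_Icc (a := -T) (b := T)).image_of_continuousOn hcont.continuousOn).bddAbove
    rw [Set.image_eq_range] at h
    exact h
  have hSle : ∀ t : Set.Icc (-T) T,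
      ‖W (t : ℝ) n‖ * Real.exp ((k - γ * |(t : ℝ)|) * N) ≤ S := fun t => le_ciSup hbdd t
  have hS0 : 0 ≤ S := le_trans (by positivity) (hSle ⟨0, by constructor <;> linarith⟩)
  have ha : |a| ≤ ‖ω‖ * N := by
    calc |a| ≤ ∑ i, |ω i * (n i : ℝ)| := Finset.abs_sum_le_sum_abs _ _
      _ = ∑ i, |ω i| * |(n i : ℝ)| := by simp [abs_mul]
      _ ≤ ∑ i, ‖ω‖ * |(n i : ℝ)| := Finset.sum_le_sum fun i _ =>
          mul_le_mul_of_nonneg_right (aux_coord ν ω i) (abs_nonneg _)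
      _ = ‖ω‖ * N := by rw [Finset.mul_sum]
  apply ciSup_le
  intro t
  have hexp : ∀ τ : ℝ,
      ‖Complex.exp (-(((t : ℝ) - τ : ℝ) : ℂ) * m a) * W τ n‖ = ‖W τ n‖ := by
    intro τ
    rw [norm_mul]
    simp [Complex.norm_exp, Complex.mul_re, him]
  have hsub : Set.uIcc (0:ℝ) (t : ℝ) ⊆ Set.Icc (-T) T :=
    Set.uIcc_subset_Icc ⟨by linarith, by linarith⟩ ⟨t.2.1, t.2.2⟩
  have hWb : ∀ τ ∈ Set.uIcc (0:ℝ) (t : ℝ),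
      ‖W τ n‖ ≤ S * Real.exp (-((k - γ * |τ|) * N)) := by
    intro τ hτ
    have h := hSle ⟨τ, hsub hτ⟩
    calc ‖W τ n‖
        = ‖W τ n‖ * Real.exp ((k - γ * |τ|) * N) * Real.exp (-((k - γ * |τ|) * N)) := by
          rw [mul_assoc, ← Real.exp_add, add_neg_cancel, Real.exp_zero, mul_one]
      _ ≤ S * Real.exp (-((k - γ * |τ|) * N)) :=
          mul_le_mul_of_nonneg_right h (Real.exp_nonneg _)
  have hint1 : IntervalIntegrable (fun τ => ‖W τ n‖) volume 0 (t : ℝ) :=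
    ((hWc n).norm).intervalIntegrable _ _
  have hint2 : IntervalIntegrable (fun τ => S * Real.exp (-((k - γ * |τ|) * N)))
      volume 0 (t : ℝ) := Continuous.intervalIntegrable (by fun_prop) _ _
  calc ‖(Complex.I * (a : ℂ)) *
        ∫ τ in (0:ℝ)..(t : ℝ), Complex.exp (-(((t : ℝ) - τ : ℝ) : ℂ) * m a) * W τ n‖ *
        Real.exp ((k - γ * |(t : ℝ)|) * N)
      = |a| * ‖∫ τ in (0:ℝ)..(t : ℝ), Complex.exp (-(((t : ℝ) - τ : ℝ) : ℂ) * m a) * W τ n‖ *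
        Real.exp ((k - γ * |(t : ℝ)|) * N) := by
        rw [norm_mul, norm_mul, Complex.norm_I, one_mul, Complex.norm_real, Real.norm_eq_abs]
    _ ≤ |a| * |∫ τ in (0:ℝ)..(t : ℝ), S * Real.exp (-((k - γ * |τ|) * N))| *
        Real.exp ((k - γ * |(t : ℝ)|) * N) := by
        gcongr
        calc ‖∫ τ in (0:ℝ)..(t : ℝ), Complex.exp (-(((t : ℝ) - τ : ℝ) : ℂ) * m a) * W τ n‖
            ≤ |∫ τ in (0:ℝ)..(t : ℝ), ‖Complex.exp (-(((t : ℝ) - τ : ℝ) : ℂ) * m a) * W τ n‖| :=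
              norm_integral_le_abs_integral_norm
          _ = |∫ τ in (0:ℝ)..(t : ℝ), ‖W τ n‖| := by
              rw [integral_congr fun τ _ => hexp τ]
          _ ≤ |∫ τ in (0:ℝ)..(t : ℝ), S * Real.exp (-((k - γ * |τ|) * N))| :=
              aux_abs_integral_mono hint1 hint2 (fun τ _ => norm_nonneg _) hWb
    _ = (|a| * S) * (|∫ τ in (0:ℝ)..(t : ℝ), Real.exp (-((k - γ * |τ|) * N))| *
        Real.exp ((k - γ * |(t : ℝ)|) * N)) := by
        rw [intervalIntegral.integral_const_mul, abs_mul, abs_of_nonneg hS0]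
        ring
    _ ≤ ((‖ω‖ * N) * S) * (|∫ τ in (0:ℝ)..(t : ℝ), Real.exp (-((k - γ * |τ|) * N))| *
        Real.exp ((k - γ * |(t : ℝ)|) * N)) := by
        apply mul_le_mul_of_nonneg_right (mul_le_mul_of_nonneg_right ha hS0) (by positivity)
    _ = (‖ω‖ * S) * (N * (Real.exp ((k - γ * |(t : ℝ)|) * N) *
        |∫ τ in (0:ℝ)..(t : ℝ), Real.exp (-((k - γ * |τ|) * N))|)) := by ring
    _ ≤ (‖ω‖ * S) * (1 / γ) :=
        mul_le_mul_of_nonneg_left (aux_key2 γ k N (t : ℝ) hγ hN) (by positivity)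
    _ = (‖ω‖ / γ) * S := by ring

/-- Second linear (Duhamel) estimate: for purely imaginary symbol `m`, the operator
`(ΦW)(t,n) = i⟨ω,n⟩ ∫_0^t e^{-(t-τ)m(⟨ω,n⟩)} Ŵ(τ,n) dτ` satisfies
`‖ΦW‖_{k,γ,T} ≤ (|ω|/γ) ‖W‖_{k,γ,T}`. -/
theorem stmt7 (ν : ℕ) (k γ T : ℝ) (hγ : 0 < γ) (hT : 0 < T) (hkγT : 0 < k - γ * T)
    (ω : EuclideanSpace ℝ (Fin ν))
    (m : ℝ → ℂ) (him : ∀ ξ, (m ξ).re = 0)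
    (W : ℝ → (Fin ν → ℤ) → ℂ) (hWc : ∀ n, Continuous fun t => W t n)
    (hW : Summable (fun n : Fin ν → ℤ =>
      ⨆ t : Set.Icc (-T) T,
        ‖W (t : ℝ) n‖ * Real.exp ((k - γ * |(t : ℝ)|) * (∑ i, |(n i : ℝ)|)))) :
    ∑' n : Fin ν → ℤ, ⨆ t : Set.Icc (-T) T,
        ‖(Complex.I * ((∑ i, ω i * (n i : ℝ) : ℝ) : ℂ)) *
            ∫ τ in (0 : ℝ)..(t : ℝ),
              Complex.exp (-(((t : ℝ) - τ : ℝ) : ℂ) * m (∑ i, ω i * (n i : ℝ))) * W τ n‖ *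
          Real.exp ((k - γ * |(t : ℝ)|) * (∑ i, |(n i : ℝ)|))
      ≤ (‖ω‖ / γ) *
        ∑' n : Fin ν → ℤ, ⨆ t : Set.Icc (-T) T,
          ‖W (t : ℝ) n‖ * Real.exp ((k - γ * |(t : ℝ)|) * (∑ i, |(n i : ℝ)|)) := by
  haveI : Nonempty (Set.Icc (-T) T) := ⟨⟨0, by constructor <;> linarith⟩⟩
  have key := fun n => aux_n ν k γ T hγ hT ω m him W hWc n
  have h0 : ∀ n : Fin ν → ℤ, (0:ℝ) ≤ ⨆ t : Set.Icc (-T) T,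
      ‖(Complex.I * ((∑ i, ω i * (n i : ℝ) : ℝ) : ℂ)) *
          ∫ τ in (0 : ℝ)..(t : ℝ),
            Complex.exp (-(((t : ℝ) - τ : ℝ) : ℂ) * m (∑ i, ω i * (n i : ℝ))) * W τ n‖ *
        Real.exp ((k - γ * |(t : ℝ)|) * (∑ i, |(n i : ℝ)|)) :=
    fun n => Real.iSup_nonneg fun t => by positivity
  have hsum2 := hW.mul_left (‖ω‖ / γ)
  have hsum1 := Summable.of_nonneg_of_le h0 key hsum2
  calc _ ≤ ∑' n : Fin ν → ℤ, (‖ω‖ / γ) * ⨆ t : Set.Icc (-T) T,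
        ‖W (t : ℝ) n‖ * Real.exp ((k - γ * |(t : ℝ)|) * (∑ i, |(n i : ℝ)|)) :=
      Summable.tsum_le_tsum key hsum1 hsum2
    _ = _ := tsum_mul_left
end

section
/- Let α = ∑_{n=1}^∞ 1/(10↑↑n), ω = (1, α), and let 0 < κ ≤ (ln 9)/4. Then the function u with Fourier coefficients û(n) = e^{-κ|n|} (n ∈ ℤ²) satisfies: there exist infinitely many n ∈ ℤ² with |⟨ω, n⟩|^{-1/2} |û(n)| ≥ 1, so that in particular the sum ∑_{n ∈ ℤ²} |⟨ω,n⟩|^{-1} |û(n)|² diverges. -/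
/-- `tow n = 10↑↑n` for `n ≥ 1` (with `tow 0 = 1`): the `n`-fold power tower of 10s. -/
def tow : ℕ → ℕ
  | 0 => 1
  | n + 1 => 10 ^ tow n

lemma tow_succ' (n : ℕ) : tow (n+1) = 10 ^ tow n := rfl
lemma tow_zero' : tow 0 = 1 := rfl

lemma tow_pos (n : ℕ) : 0 < tow n := by
  cases n with
  | zero => exact Nat.one_pos
  | succ n => exact Nat.pow_pos (by norm_num)

lemma le_tow (n : ℕ) : n + 1 ≤ tow n := by
  induction n with
  | zero => simp [tow]
  | succ n ih =>
    have : n + 2 ≤ 10 ^ (n + 1) := by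
      calc n + 2 ≤ 2 ^ (n+1) := by
            have := Nat.lt_two_pow_self (n := n+1); omega
        _ ≤ 10 ^ (n+1) := Nat.pow_le_pow_left (by norm_num) _
    calc n + 2 ≤ 10 ^ (n+1) := this
      _ ≤ 10 ^ tow n := Nat.pow_le_pow_right (by norm_num) ih
      _ = tow (n+1) := rfl

lemma tow_strictMono : StrictMono tow := by
  apply strictMono_nat_of_lt_succ
  intro n
  calc tow n < 2 ^ tow n := Nat.lt_two_pow_self
    _ ≤ 10 ^ tow n := Nat.pow_le_pow_left (by norm_num) _

lemma tow_mono : Monotone tow := tow_strictMono.monotone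

lemma ten_pow_le_tow (n : ℕ) : 10 ^ n ≤ tow n := by
  cases n with
  | zero => simp [tow]
  | succ n =>
    show 10 ^ (n+1) ≤ 10 ^ tow n
    exact Nat.pow_le_pow_right (by norm_num) (by have := le_tow n; omega)

lemma tow_dvd {m n : ℕ} (h : m ≤ n) : tow m ∣ tow n := by
  cases m with
  | zero => simpa [tow] using one_dvd _
  | succ m =>
    cases n with
    | zero => omega
    | succ n =>
      show 10 ^ tow m ∣ 10 ^ tow n
      exact pow_dvd_pow _ (tow_mono (by omega))

lemma ten_mul_le_pow (m : ℕ) : 10 * m ≤ 10 ^ m := by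
  induction m with
  | zero => norm_num
  | succ m ih =>
    cases m with
    | zero => norm_num
    | succ k =>
      have h2 : 10 ≤ 10 ^ (k+1) := by
        calc 10 = 10 ^ 1 := (pow_one 10).symm
          _ ≤ 10 ^ (k+1) := Nat.pow_le_pow_right (by norm_num) (by omega)
      calc 10 * (k+1+1) = 10 * (k+1) + 10 := by ring
        _ ≤ 10 ^ (k+1) + 10 ^ (k+1) := by omega
        _ ≤ 10 * 10 ^ (k+1) := by omega
        _ = 10 ^ (k+2) := by ring

lemma tow_succ_ge (n : ℕ) : 10 * tow n ≤ tow (n + 1) := by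
  calc 10 * tow n ≤ 10 ^ tow n := ten_mul_le_pow _
    _ = tow (n+1) := rfl

lemma tow_add_ge (k j : ℕ) : tow (k + 1) * 10 ^ j ≤ tow (k + 1 + j) := by
  induction j with
  | zero => simp
  | succ j ih =>
    calc tow (k+1) * 10 ^ (j+1) = (tow (k+1) * 10 ^ j) * 10 := by ring
      _ ≤ tow (k+1+j) * 10 := by exact Nat.mul_le_mul_right _ ih
      _ = 10 * tow (k+1+j) := by ring
      _ ≤ tow (k+1+j+1) := tow_succ_ge _
      _ = tow (k+1+(j+1)) := by ring_nf

lemma key_nat : ∀ N, 324 ≤ N → 2 * N * 9 ^ N ≤ 10 ^ N := by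
  intro N hN
  induction N, hN using Nat.le_induction with
  | base => decide
  | succ n hn ih =>
    have h9 : 9 * (n + 1) ≤ 10 * n := by omega
    calc 2 * (n+1) * 9 ^ (n+1) = (9 * (n+1)) * (2 * 9 ^ n) := by ring
      _ ≤ (10 * n) * (2 * 9 ^ n) := Nat.mul_le_mul_right _ h9
      _ = 10 * (2 * n * 9 ^ n) := by ring
      _ ≤ 10 * 10 ^ n := Nat.mul_le_mul_left _ ih
      _ = 10 ^ (n+1) := by ring

lemma summable_tow : Summable (fun j : ℕ => (1:ℝ) / tow (j+1)) := by
  have hg : Summable (fun j : ℕ => (1/10 : ℝ) ^ (j+1)) :=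
    (((summable_geometric_of_lt_one (r := (1/10:ℝ)) (by norm_num) (by norm_num))).mul_left (1/10)).congr
      (fun j => by rw [pow_succ]; ring)
  refine hg.of_nonneg_of_le (fun j => by positivity) (fun j => ?_)
  rw [one_div, one_div_pow, one_div]
  apply inv_anti₀ (by positivity)
  have := ten_pow_le_tow (j+1)
  exact_mod_cast this

lemma summable_tow' (c : ℝ) (k : ℕ) :
    Summable (fun j : ℕ => c / (tow (j+k+1) : ℝ)) := by
  have h := (summable_tow.mul_left c).comp_injective (add_right_injective k)
  refine h.congr fun j => ?_
  show c * (1 / (tow (k + j + 1) : ℝ)) = _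
  rw [mul_one_div]
  have h2 : k + j + 1 = j + k + 1 := by omega
  rw [h2]

noncomputable def pk (k : ℕ) : ℕ := ∑ j ∈ Finset.range k, tow k / tow (j+1)

noncomputable def Rk (k : ℕ) : ℝ := ∑' j : ℕ, (tow k : ℝ) / tow (j + k + 1)

lemma pk_cast (k : ℕ) :
    (pk k : ℝ) = ∑ j ∈ Finset.range k, (tow k : ℝ) / (tow (j+1) : ℝ) := by
  rw [pk, Nat.cast_sum]
  refine Finset.sum_congr rfl fun j hj => ?_
  have hjk : j + 1 ≤ k := Finset.mem_range.mp hj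
  rw [Nat.cast_div (tow_dvd hjk) (by exact_mod_cast (tow_pos _).ne')]

lemma alpha_eq (k : ℕ) :
    (tow k : ℝ) * (∑' j : ℕ, (1:ℝ)/tow (j+1)) = pk k + Rk k := by
  rw [← tsum_mul_left]
  have h : Summable (fun j : ℕ => (tow k : ℝ) * (1 / tow (j+1))) :=
    summable_tow.mul_left _
  rw [← Summable.sum_add_tsum_nat_add k h, pk_cast, Rk]
  congr 1
  · exact Finset.sum_congr rfl fun j _ => by rw [mul_one_div]
  · exact tsum_congr fun j => by rw [mul_one_div]

lemma Rk_pos (k : ℕ) : 0 < Rk k := by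
  refine Summable.tsum_pos (summable_tow' _ k) (fun j => by positivity) 0 ?_
  have h1 : (0:ℝ) < tow k := by exact_mod_cast tow_pos k
  have h2 : (0:ℝ) < tow (0 + k + 1) := by exact_mod_cast tow_pos _
  positivity

lemma Rk_le (k : ℕ) : Rk k ≤ 2 * (tow k : ℝ) / (tow (k+1) : ℝ) := by
  have hb : ∀ j : ℕ, (tow k : ℝ) / tow (j + k + 1)
      ≤ ((tow k : ℝ) / tow (k+1)) * (1/10) ^ j := by
    intro j
    have h1 : (tow (k+1) : ℝ) * 10 ^ j ≤ (tow (j + k + 1) : ℝ) := by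
      have := tow_add_ge k j
      have h2 : k + 1 + j = j + k + 1 := by omega
      rw [h2] at this
      exact_mod_cast this
    have h3 : (0:ℝ) < (tow (k+1) : ℝ) * 10 ^ j := by
      have : (0:ℝ) < tow (k+1) := by exact_mod_cast tow_pos _
      positivity
    calc (tow k : ℝ) / tow (j + k + 1) ≤ (tow k : ℝ) / ((tow (k+1) : ℝ) * 10 ^ j) := by
          apply div_le_div_of_nonneg_left (by positivity) h3 h1
      _ = ((tow k : ℝ) / tow (k+1)) * (1/10) ^ j := by
          rw [one_div, inv_pow, ← div_eq_mul_inv, div_div]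
  have hgs : Summable (fun j : ℕ => ((tow k : ℝ) / tow (k+1)) * (1/10) ^ j) :=
    (summable_geometric_of_lt_one (by norm_num) (by norm_num)).mul_left _
  calc Rk k ≤ ∑' j : ℕ, ((tow k : ℝ) / tow (k+1)) * (1/10) ^ j :=
        Summable.tsum_le_tsum hb (summable_tow' _ k) hgs
    _ = ((tow k : ℝ) / tow (k+1)) * (10/9) := by
        rw [tsum_mul_left, tsum_geometric_of_lt_one (by norm_num) (by norm_num)]
        norm_num
    _ ≤ 2 * (tow k : ℝ) / (tow (k+1) : ℝ) := by
        have h1 : (0:ℝ) ≤ tow k := by positivity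
        have h2 : (0:ℝ) < tow (k+1) := by exact_mod_cast tow_pos _
        rw [mul_comm, mul_div_assoc]
        apply mul_le_mul_of_nonneg_right _ (by positivity)
        norm_num

lemma pk_le (k : ℕ) : (pk k : ℝ) ≤ (tow k : ℝ) := by
  rw [pk_cast]
  have hb : ∀ j ∈ Finset.range k, (tow k : ℝ) / tow (j+1) ≤ (tow k : ℝ) * (1/10) ^ (j+1) := by
    intro j _
    have h1 : ((10:ℝ)) ^ (j+1) ≤ (tow (j+1) : ℝ) := by exact_mod_cast ten_pow_le_tow (j+1)
    have h3 : (0:ℝ) < (10:ℝ) ^ (j+1) := by positivity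
    calc (tow k : ℝ) / tow (j+1) ≤ (tow k : ℝ) / 10 ^ (j+1) :=
          div_le_div_of_nonneg_left (by positivity) h3 h1
      _ = (tow k : ℝ) * (1/10) ^ (j+1) := by rw [one_div_pow, div_eq_mul_inv, one_div]
  calc ∑ j ∈ Finset.range k, (tow k : ℝ) / tow (j+1)
      ≤ ∑ j ∈ Finset.range k, (tow k : ℝ) * (1/10) ^ (j+1) := Finset.sum_le_sum hb
    _ ≤ ∑' j : ℕ, (tow k : ℝ) * (1/10) ^ (j+1) := by
        apply Summable.sum_le_tsum _ (fun j _ => by positivity)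
        exact ((summable_geometric_of_lt_one (r := (1/10:ℝ)) (by norm_num)
          (by norm_num)).mul_left ((tow k : ℝ) * (1/10))).congr
          (fun j => by rw [pow_succ]; ring)
    _ = (tow k : ℝ) * (1/9) := by
        have : ∑' j : ℕ, (tow k : ℝ) * (1/10) ^ (j+1)
            = ∑' j : ℕ, ((tow k : ℝ) * (1/10)) * (1/10) ^ j := by
          exact tsum_congr fun j => by rw [pow_succ]; ring
        rw [this, tsum_mul_left, tsum_geometric_of_lt_one (by norm_num) (by norm_num)]
        norm_num; ring
    _ ≤ (tow k : ℝ) := by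
        have : (0:ℝ) ≤ tow k := by positivity
        nlinarith

lemma tow_two : tow 2 = 10 ^ 10 := by
  rw [tow_succ', tow_succ']
  rw [tow_zero']; norm_num

lemma main_est (κ : ℝ) (hκ0 : 0 < κ) (hκ : κ ≤ Real.log 9 / 4) (k : ℕ) (hk : 2 ≤ k) :
    Rk k ≤ Real.exp (-(2*κ) * ((pk k : ℝ) + (tow k : ℝ))) := by
  set N := tow k with hNdef
  have hN324 : 324 ≤ N := by
    have := tow_mono hk
    rw [tow_two] at this
    omega
  have hNpos : 0 < N := tow_pos k
  have hNR : (0:ℝ) < N := by exact_mod_cast hNpos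
  -- step 1 : Rk ≤ 2N/10^N
  have h1 : Rk k ≤ 2 * (N:ℝ) / (10:ℝ) ^ N := by
    have := Rk_le k
    rwa [tow_succ', Nat.cast_pow, Nat.cast_ofNat] at this
  -- step 2 : 2N/10^N ≤ (9^N)⁻¹
  have h2 : 2 * (N:ℝ) / (10:ℝ) ^ N ≤ ((9:ℝ) ^ N)⁻¹ := by
    have hkey : (2 * N * 9 ^ N : ℝ) ≤ (10:ℝ) ^ N := by exact_mod_cast key_nat N hN324
    rw [div_le_iff₀ (by positivity), inv_mul_eq_div, le_div_iff₀ (by positivity)]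
    nlinarith [pow_pos (by norm_num : (0:ℝ) < 9) N]
  -- step 3 : (9^N)⁻¹ ≤ exp(-(2κ)(pk+N))
  have h3 : ((9:ℝ) ^ N)⁻¹ ≤ Real.exp (-(2*κ) * ((pk k : ℝ) + (N:ℝ))) := by
    have hexp : Real.exp ((2*κ) * ((pk k : ℝ) + (N:ℝ))) ≤ (9:ℝ) ^ N := by
      have hpk : (pk k : ℝ) ≤ (N:ℝ) := pk_le k
      have harg : (2*κ) * ((pk k : ℝ) + (N:ℝ)) ≤ (N:ℝ) * Real.log 9 := by
        have hpk0 : (0:ℝ) ≤ (pk k : ℝ) := by positivity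
        nlinarith [Real.log_pos (by norm_num : (1:ℝ) < 9)]
      calc Real.exp ((2*κ) * ((pk k : ℝ) + (N:ℝ))) ≤ Real.exp ((N:ℝ) * Real.log 9) :=
            Real.exp_le_exp.mpr harg
        _ = (9:ℝ) ^ N := by
            rw [Real.exp_nat_mul, Real.exp_log (by norm_num)]
    rw [neg_mul, Real.exp_neg]
    exact inv_anti₀ (Real.exp_pos _) hexp
  linarith

lemma mem_est (κ : ℝ) (hκ0 : 0 < κ) (hκ : κ ≤ Real.log 9 / 4) (k : ℕ) (hk : 2 ≤ k) :
    1 ≤ |(-(pk k : ℝ)) + (∑' j : ℕ, (1 : ℝ) / tow (j + 1)) * (tow k : ℝ)| ^ (-(1 / 2 : ℝ)) *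
      Real.exp (-κ * ((pk k : ℝ) + (tow k : ℝ))) := by
  have hx : (-(pk k : ℝ)) + (∑' j : ℕ, (1 : ℝ) / tow (j + 1)) * (tow k : ℝ) = Rk k := by
    rw [mul_comm, alpha_eq]; ring
  rw [hx, abs_of_pos (Rk_pos k), Real.rpow_def_of_pos (Rk_pos k), ← Real.exp_add]
  apply Real.one_le_exp
  have hlog : Real.log (Rk k) ≤ -(2*κ) * ((pk k : ℝ) + (tow k : ℝ)) := by
    calc Real.log (Rk k) ≤ Real.log (Real.exp (-(2*κ) * ((pk k : ℝ) + (tow k : ℝ)))) :=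
          Real.log_le_log (Rk_pos k) (main_est κ hκ0 hκ k hk)
      _ = -(2*κ) * ((pk k : ℝ) + (tow k : ℝ)) := Real.log_exp _
  nlinarith

/-- With `α = ∑_{n≥1} 1/(10↑↑n)`, `ω = (1,α)` and `0 < κ ≤ (ln 9)/4`, the analytic
quasi-periodic function with coefficients `û(n) = e^{-κ|n|}` has infinitely many `n ∈ ℤ²`
with `|⟨ω,n⟩|^{-1/2} û(n) ≥ 1`; in particular `∑_n |⟨ω,n⟩|⁻¹ |û(n)|²` diverges. -/
theorem stmt11 (κ : ℝ) (hκ0 : 0 < κ) (hκ : κ ≤ Real.log 9 / 4) :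
    {n : ℤ × ℤ |
        1 ≤ |(n.1 : ℝ) + (∑' j : ℕ, (1 : ℝ) / tow (j + 1)) * (n.2 : ℝ)| ^ (-(1 / 2 : ℝ)) *
          Real.exp (-κ * (|(n.1 : ℝ)| + |(n.2 : ℝ)|))}.Infinite ∧
    ¬ Summable (fun n : ℤ × ℤ =>
        |(n.1 : ℝ) + (∑' j : ℕ, (1 : ℝ) / tow (j + 1)) * (n.2 : ℝ)|⁻¹ *
          (Real.exp (-κ * (|(n.1 : ℝ)| + |(n.2 : ℝ)|))) ^ 2) := by
  set S := {n : ℤ × ℤ |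
      1 ≤ |(n.1 : ℝ) + (∑' j : ℕ, (1 : ℝ) / tow (j + 1)) * (n.2 : ℝ)| ^ (-(1 / 2 : ℝ)) *
        Real.exp (-κ * (|(n.1 : ℝ)| + |(n.2 : ℝ)|))} with hSdef
  have hmem : ∀ k : ℕ, ((-(pk (k+2) : ℤ), (tow (k+2) : ℤ)) : ℤ × ℤ) ∈ S := by
    intro k
    have h := mem_est κ hκ0 hκ (k+2) (by omega)
    simp only [hSdef, Set.mem_setOf_eq]
    have e1 : (((-(pk (k+2) : ℤ)) : ℤ) : ℝ) = -(pk (k+2) : ℝ) := by push_cast; ring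
    have e2 : (((tow (k+2) : ℤ) : ℤ) : ℝ) = (tow (k+2) : ℝ) := by push_cast; ring
    show 1 ≤ |(((-(pk (k+2) : ℤ)) : ℤ) : ℝ) + _ * (((tow (k+2) : ℤ) : ℤ) : ℝ)| ^ (-(1/2 : ℝ)) *
      Real.exp (-κ * (|(((-(pk (k+2) : ℤ)) : ℤ) : ℝ)| + |(((tow (k+2) : ℤ) : ℤ) : ℝ)|))
    rw [e1, e2, abs_neg, abs_of_nonneg (by positivity : (0:ℝ) ≤ (pk (k+2) : ℝ)),
      abs_of_nonneg (by positivity : (0:ℝ) ≤ (tow (k+2) : ℝ))]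
    exact h
  have hinj : Function.Injective
      (fun k : ℕ => ((-(pk (k+2) : ℤ), (tow (k+2) : ℤ)) : ℤ × ℤ)) := by
    intro a b hab
    have h2 : (tow (a+2) : ℤ) = (tow (b+2) : ℤ) := congrArg Prod.snd hab
    have h3 : tow (a+2) = tow (b+2) := by exact_mod_cast h2
    have := tow_strictMono.injective h3
    omega
  have hS : S.Infinite := Set.infinite_of_injective_forall_mem hinj hmem
  refine ⟨hS, ?_⟩
  intro hs
  set g := fun n : ℤ × ℤ =>
      |(n.1 : ℝ) + (∑' j : ℕ, (1 : ℝ) / tow (j + 1)) * (n.2 : ℝ)|⁻¹ *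
        (Real.exp (-κ * (|(n.1 : ℝ)| + |(n.2 : ℝ)|))) ^ 2 with hgdef
  have ht := hs.tendsto_cofinite_zero
  have hev : ∀ᶠ n : ℤ × ℤ in Filter.cofinite, g n < 1 :=
    ht.eventually (eventually_lt_nhds one_pos)
  have hfin : {n : ℤ × ℤ | ¬ g n < 1}.Finite := Filter.eventually_cofinite.mp hev
  have hsub : S ⊆ {n : ℤ × ℤ | ¬ g n < 1} := by
    intro n hn
    simp only [hSdef, Set.mem_setOf_eq] at hn
    simp only [Set.mem_setOf_eq, not_lt]
    set x := (n.1 : ℝ) + (∑' j : ℕ, (1 : ℝ) / tow (j + 1)) * (n.2 : ℝ) with hxdef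
    set E := Real.exp (-κ * (|(n.1 : ℝ)| + |(n.2 : ℝ)|)) with hEdef
    have hxne : |x| ≠ 0 := by
      intro h0
      rw [h0, Real.zero_rpow (by norm_num : -(1/2 : ℝ) ≠ 0), zero_mul] at hn
      linarith
    have hxpos : 0 < |x| := lt_of_le_of_ne (abs_nonneg x) (Ne.symm hxne)
    have hsq : (|x| ^ (-(1/2 : ℝ)))^2 = |x|⁻¹ := by
      rw [← Real.rpow_natCast (|x| ^ (-(1/2 : ℝ))) 2, ← Real.rpow_mul (abs_nonneg x)]
      norm_num
      exact Real.rpow_neg_one _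
    have : g n = (|x| ^ (-(1/2 : ℝ)) * E)^2 := by
      rw [hgdef]
      simp only
      rw [mul_pow, hsq]
    rw [this]
    nlinarith [hn]
  exact (hS.mono hsub) hfin
end
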